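/- arXiv:1907.11509 — 6 statements merged into one kernel-verified Lean document; each statement's English description precedes it below -/
import Mathlib

section
/- Let I ⊆ ℝ∖{0} be an open interval and let p, q : I → ℂ be differentiable functions satisfying Hamilton's equations for the Painlevé V Hamiltonian defined by s·H_V = p²q(q−1)² − s·pq, namely s·q′(s) = 2p(s)q(s)(q(s)−1)² − s·q(s) and s·p′(s) = −p(s)²(q(s)−1)(3q(s)−1) + s·p(s) for all s ∈ I. Then σ(s) := p(s)²q(s)(q(s)−1)² − s·p(s)q(s) is twice differentiable on I and satisfies the Jimbo–Miwa–Okamoto σ-form of the Painlevé V equation: (s·σ″(s))² − (σ(s) − s·σ′(s) + 4(σ′(s))²)·(σ(s) − s·σ′(s)) = 0 for all s ∈ I. -/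
open Complex

/-- `σ(s) = p(s)²q(s)(q(s)−1)² − s·p(s)q(s)`, i.e. `s·H_V` for the Painlevé V
Hamiltonian `s·H_V = p²q(q−1)² − s·pq`. -/
noncomputable def sigmaPV (p q : ℝ → ℂ) (s : ℝ) : ℂ :=
  (p s) ^ 2 * q s * (q s - 1) ^ 2 - (s : ℂ) * p s * q s

/-- If `p, q` satisfy Hamilton's equations for the Painlevé V Hamiltonian
`s·H_V = p²q(q−1)² − s·pq` on an open interval `I ⊆ ℝ∖{0}`, then
`σ = p²q(q−1)² − s·pq` is twice differentiable on `I` and satisfies the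
Jimbo–Miwa–Okamoto σ-form `(sσ″)² − (σ − sσ′ + 4σ′²)(σ − sσ′) = 0`. -/
theorem sigma_form_of_painleveV_hamiltonian
    (I : Set ℝ) (hIopen : IsOpen I) (hIconn : I.OrdConnected) (hI0 : (0 : ℝ) ∉ I)
    (p q : ℝ → ℂ)
    (hdiff : ∀ s ∈ I, DifferentiableAt ℝ p s ∧ DifferentiableAt ℝ q s)
    (hq : ∀ s ∈ I, (s : ℂ) * deriv q s
        = 2 * p s * q s * (q s - 1) ^ 2 - (s : ℂ) * q s)
    (hp : ∀ s ∈ I, (s : ℂ) * deriv p s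
        = -(p s) ^ 2 * (q s - 1) * (3 * q s - 1) + (s : ℂ) * p s) :
    ∀ s ∈ I,
      DifferentiableAt ℝ (sigmaPV p q) s ∧
      DifferentiableAt ℝ (deriv (sigmaPV p q)) s ∧
      ((s : ℂ) * deriv (deriv (sigmaPV p q)) s) ^ 2
        - (sigmaPV p q s - (s : ℂ) * deriv (sigmaPV p q) s
            + 4 * (deriv (sigmaPV p q) s) ^ 2)
          * (sigmaPV p q s - (s : ℂ) * deriv (sigmaPV p q) s) = 0 := by
  -- On `I`, `σ' = -p q`.
  have hds : ∀ s ∈ I, HasDerivAt (sigmaPV p q) (-(p s * q s)) s := by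
    intro s hs
    have hsne : (s : ℂ) ≠ 0 := by
      exact_mod_cast fun h => hI0 ((by exact_mod_cast h : s = 0) ▸ hs)
    obtain ⟨hdp, hdq⟩ := hdiff s hs
    have Hp : HasDerivAt p (deriv p s) s := hdp.hasDerivAt
    have Hq : HasDerivAt q (deriv q s) s := hdq.hasDerivAt
    have Hs : HasDerivAt (fun t : ℝ => (t : ℂ)) 1 s := by
      simpa using (hasDerivAt_id s).ofReal_comp
    have dq : deriv q s = (2 * p s * q s * (q s - 1) ^ 2 - (s : ℂ) * q s) / s := by
      rw [eq_div_iff hsne]; linear_combination hq s hs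
    have dp : deriv p s = (-(p s) ^ 2 * (q s - 1) * (3 * q s - 1) + (s : ℂ) * p s) / s := by
      rw [eq_div_iff hsne]; linear_combination hp s hs
    have Hq1 : HasDerivAt (fun t => (q t - 1) ^ 2) (2 * (q s - 1) * deriv q s) s := by
      have h := (Hq.sub_const 1).mul (Hq.sub_const 1)
      have he : (fun t => (q t - 1) ^ 2) = fun t => (q t - 1) * (q t - 1) := by
        funext t; ring
      rw [he]; refine h.congr_deriv ?_; ring
    have Hp2 : HasDerivAt (fun t => (p t) ^ 2) (2 * p s * deriv p s) s := by
      have h := Hp.mul Hp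
      have he : (fun t => (p t) ^ 2) = fun t => p t * p t := by funext t; ring
      rw [he]; refine h.congr_deriv ?_; ring
    have H := ((Hp2.mul Hq).mul Hq1).sub ((Hs.mul Hp).mul Hq)
    have hfun : sigmaPV p q = fun t : ℝ =>
        (p t) ^ 2 * q t * (q t - 1) ^ 2 - (t : ℂ) * p t * q t := rfl
    rw [hfun]
    refine H.congr_deriv ?_
    rw [dq, dp]
    push_cast [Pi.mul_apply]
    field_simp
    ring
  intro s hs
  have hsne : (s : ℂ) ≠ 0 := by
    exact_mod_cast fun h => hI0 ((by exact_mod_cast h : s = 0) ▸ hs)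
  obtain ⟨hdp, hdq⟩ := hdiff s hs
  have dq : deriv q s = (2 * p s * q s * (q s - 1) ^ 2 - (s : ℂ) * q s) / s := by
    rw [eq_div_iff hsne]; linear_combination hq s hs
  have dp : deriv p s = (-(p s) ^ 2 * (q s - 1) * (3 * q s - 1) + (s : ℂ) * p s) / s := by
    rw [eq_div_iff hsne]; linear_combination hp s hs
  have hEv : deriv (sigmaPV p q) =ᶠ[nhds s] fun t => -(p t * q t) := by
    filter_upwards [hIopen.mem_nhds hs] with t ht
    exact (hds t ht).deriv
  have hfd : DifferentiableAt ℝ (fun t => -(p t * q t)) s := (hdp.mul hdq).neg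
  have hd1 : DifferentiableAt ℝ (sigmaPV p q) s := (hds s hs).differentiableAt
  have hd2 : DifferentiableAt ℝ (deriv (sigmaPV p q)) s :=
    hfd.congr_of_eventuallyEq hEv
  refine ⟨hd1, hd2, ?_⟩
  have e1 : deriv (sigmaPV p q) s = -(p s * q s) := (hds s hs).deriv
  have e2 : deriv (deriv (sigmaPV p q)) s = -(deriv p s * q s + p s * deriv q s) := by
    rw [hEv.deriv_eq]
    have : HasDerivAt (fun t => -(p t * q t))
        (-(deriv p s * q s + p s * deriv q s)) s :=
      (hdp.hasDerivAt.mul hdq.hasDerivAt).neg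
    exact this.deriv
  rw [e1, e2, dq, dp, sigmaPV]
  field_simp
  ring
end

section
/- Let I ⊆ ℝ∖{0} be an open interval and let v : I → ℂ be twice differentiable with v(s) ∉ {0, 1, −1} for all s ∈ I, satisfying v″ − (2v/(v²−1))·(v′)² + v′/s + v/(2s) + v(v²+1)/(4(v²−1)) = 0 on I. Then q := v² satisfies the Painlevé V equation q″ − (1/(q−1) + 1/(2q))·(q′)² + q′/s + q/s + q(q+1)/(2(q−1)) = 0 on I. -/
open Complex

/-- If `v` is twice differentiable on an open interval `I ⊆ ℝ∖{0}`, avoids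
`{0, 1, −1}`, and satisfies
`v″ − (2v/(v²−1))v′² + v′/s + v/(2s) + v(v²+1)/(4(v²−1)) = 0`,
then `q = v²` satisfies the Painlevé V equation
`q″ − (1/(q−1) + 1/(2q))q′² + q′/s + q/s + q(q+1)/(2(q−1)) = 0`. -/
theorem v_equation_to_painleveV
    (I : Set ℝ) (hIopen : IsOpen I) (hIconn : I.OrdConnected)
    (hI0 : (0 : ℝ) ∉ I) (v : ℝ → ℂ)
    (hdiff : ∀ s ∈ I, DifferentiableAt ℝ v s ∧ DifferentiableAt ℝ (deriv v) s)
    (hval : ∀ s ∈ I, v s ≠ 0 ∧ v s ≠ 1 ∧ v s ≠ -1)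
    (heq : ∀ s ∈ I,
      deriv (deriv v) s - (2 * v s / ((v s) ^ 2 - 1)) * (deriv v s) ^ 2
        + deriv v s / (s : ℂ) + v s / (2 * (s : ℂ))
        + v s * ((v s) ^ 2 + 1) / (4 * ((v s) ^ 2 - 1)) = 0) :
    ∀ s ∈ I,
      DifferentiableAt ℝ (fun x : ℝ => (v x) ^ 2) s ∧
      DifferentiableAt ℝ (deriv (fun x : ℝ => (v x) ^ 2)) s ∧
      deriv (deriv (fun x : ℝ => (v x) ^ 2)) s
        - (1 / ((v s) ^ 2 - 1) + 1 / (2 * (v s) ^ 2))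
          * (deriv (fun x : ℝ => (v x) ^ 2) s) ^ 2
        + deriv (fun x : ℝ => (v x) ^ 2) s / (s : ℂ)
        + (v s) ^ 2 / (s : ℂ)
        + (v s) ^ 2 * ((v s) ^ 2 + 1) / (2 * ((v s) ^ 2 - 1)) = 0 := by
  intro s hs
  obtain ⟨hv1, hv2⟩ := hdiff s hs
  obtain ⟨h0, h1, hm1⟩ := hval s hs
  have hsR : (s : ℝ) ≠ 0 := fun h => hI0 (h ▸ hs)
  have hsne : (s : ℂ) ≠ 0 := by exact_mod_cast hsR
  have ha : (v s) ^ 2 - 1 ≠ 0 := by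
    have : (v s) ^ 2 - 1 = (v s - 1) * (v s + 1) := by ring
    rw [this]
    exact mul_ne_zero (sub_ne_zero.mpr h1) (fun h => hm1 (by linear_combination h))
  -- deriv of q on I
  have hderivq : Set.EqOn (deriv (fun x : ℝ => (v x) ^ 2))
      (fun x => 2 * v x * deriv v x) I := by
    intro x hx
    have hd := (hdiff x hx).1
    have : (fun x : ℝ => (v x) ^ 2) = fun x => v x * v x := by ext y; ring
    rw [this, deriv_fun_mul hd hd]
    ring
  have hev : deriv (fun x : ℝ => (v x) ^ 2) =ᶠ[nhds s]
      (fun x => 2 * v x * deriv v x) :=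
    Filter.eventuallyEq_of_mem (hIopen.mem_nhds hs) hderivq
  have hd1 : DifferentiableAt ℝ (fun x : ℝ => (v x) ^ 2) s := hv1.pow 2
  have hdg : DifferentiableAt ℝ (fun x => 2 * v x * deriv v x) s :=
    (hv1.const_mul 2).mul hv2
  have hd2 : DifferentiableAt ℝ (deriv (fun x : ℝ => (v x) ^ 2)) s :=
    hdg.congr_of_eventuallyEq hev
  refine ⟨hd1, hd2, ?_⟩
  have hq' : deriv (fun x : ℝ => (v x) ^ 2) s = 2 * v s * deriv v s := hderivq hs
  have hq'' : deriv (deriv (fun x : ℝ => (v x) ^ 2)) s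
      = 2 * (deriv v s) ^ 2 + 2 * v s * deriv (deriv v) s := by
    rw [hev.deriv_eq, deriv_fun_mul (hv1.const_mul 2) hv2, deriv_const_mul 2 hv1]
    ring
  have hc : deriv (deriv v) s
      = (2 * v s / ((v s) ^ 2 - 1)) * (deriv v s) ^ 2 - deriv v s / (s : ℂ)
        - v s / (2 * (s : ℂ)) - v s * ((v s) ^ 2 + 1) / (4 * ((v s) ^ 2 - 1)) := by
    linear_combination heq s hs
  have hinv : (v s) ^ 2 * ((v s) ^ 2)⁻¹ = 1 := mul_inv_cancel₀ (pow_ne_zero 2 h0)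
  have h24 : (2 * ((v s) ^ 2 - 1))⁻¹ = 2 * (4 * ((v s) ^ 2 - 1))⁻¹ := by
    rw [mul_inv, mul_inv]
    ring
  rw [hq', hq'']
  linear_combination (2 * v s) * heq s hs - 2 * (deriv v s) ^ 2 * hinv
    + (v s) ^ 2 * ((v s) ^ 2 + 1) * h24
end

section
/- Let α ∈ ℂ, let I ⊆ ℝ∖{0} be an open interval, and let u₁, v₁ : I → ℂ be differentiable with v₁(s) ≠ 0 for all s ∈ I, satisfying s·u₁′ = (1/2)s·u₁ − 2u₁²v₁(v₁²−1) + 2α·u₁v₁ and s·v₁′ = −(1/2)s·v₁ + u₁(v₁²−1)² − α(v₁²−1) on I. Define u₂ := −u₁v₁² and v₂ := 1/v₁. Then the quadruple (u₁, v₁, u₂, v₂) satisfies the coupled Painlevé V system with parameters (α, 0) on I. Moreover, if α = 0, then the Hamiltonian of the coupled Painlevé V system satisfies s·H = u₁²(v₁²−1)² − s·u₁v₁ on I. -/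
open Complex Filter Topology MeasureTheory

/-- Right-hand side of the `u₁`-equation of the coupled Painlevé V system in
dimension four: `s·u₁′ = (s/2)u₁ − u₁²(v₁−1)(3v₁−1) − u₁u₂(v₂−1)(2v₁+v₂−1)
+ 2(α+β)u₁v₁ − 2βu₁`. -/
noncomputable def cpvRHSu₁ (α β s u₁ u₂ v₁ v₂ : ℂ) : ℂ :=
  (s / 2) * u₁ - u₁ ^ 2 * (v₁ - 1) * (3 * v₁ - 1)
    - u₁ * u₂ * (v₂ - 1) * (2 * v₁ + v₂ - 1) + 2 * (α + β) * u₁ * v₁ - 2 * β * u₁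

/-- Right-hand side of the `u₂`-equation of the coupled Painlevé V system. -/
noncomputable def cpvRHSu₂ (α β s u₁ u₂ v₁ v₂ : ℂ) : ℂ :=
  -(s / 2) * u₂ - u₂ ^ 2 * (v₂ - 1) * (3 * v₂ - 1)
    - u₁ * u₂ * (v₁ - 1) * (v₁ + 2 * v₂ - 1) + 2 * (α + β) * u₂ * v₂ - 2 * β * u₂

/-- Right-hand side of the `v₁`-equation of the coupled Painlevé V system. -/
noncomputable def cpvRHSv₁ (α β s u₁ u₂ v₁ v₂ : ℂ) : ℂ :=
  -(s / 2) * v₁ + 2 * u₁ * v₁ * (v₁ - 1) ^ 2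
    + u₂ * (v₁ + v₂) * (v₁ - 1) * (v₂ - 1) - α * (v₁ ^ 2 - 1) - β * (v₁ - 1) ^ 2

/-- Right-hand side of the `v₂`-equation of the coupled Painlevé V system. -/
noncomputable def cpvRHSv₂ (α β s u₁ u₂ v₁ v₂ : ℂ) : ℂ :=
  (s / 2) * v₂ + 2 * u₂ * v₂ * (v₂ - 1) ^ 2
    + u₁ * (v₁ + v₂) * (v₁ - 1) * (v₂ - 1) - α * (v₂ ^ 2 - 1) - β * (v₂ - 1) ^ 2

/-- `s·H` for the coupled Painlevé V system: `s·H = u₁²v₁(v₁−1)² + u₂²v₂(v₂−1)²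
− (s/2)(u₁v₁ − u₂v₂) − α(u₁(v₁²−1) + u₂(v₂²−1)) − β(u₁(v₁−1)² + u₂(v₂−1)²)
+ u₁u₂(v₁+v₂)(v₁−1)(v₂−1)`. -/
noncomputable def cpvSH (α β s u₁ u₂ v₁ v₂ : ℂ) : ℂ :=
  u₁ ^ 2 * v₁ * (v₁ - 1) ^ 2 + u₂ ^ 2 * v₂ * (v₂ - 1) ^ 2
    - (s / 2) * (u₁ * v₁ - u₂ * v₂)
    - α * (u₁ * (v₁ ^ 2 - 1) + u₂ * (v₂ ^ 2 - 1))
    - β * (u₁ * (v₁ - 1) ^ 2 + u₂ * (v₂ - 1) ^ 2)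
    + u₁ * u₂ * (v₁ + v₂) * (v₁ - 1) * (v₂ - 1)

/-- The Hamiltonian `H` of the coupled Painlevé V system, defined by `s·H = cpvSH`. -/
noncomputable def cpvH (α β s u₁ u₂ v₁ v₂ : ℂ) : ℂ := cpvSH α β s u₁ u₂ v₁ v₂ / s

/-- `(u₁, u₂, v₁, v₂)` is a solution of the coupled Painlevé V system in dimension
four with parameters `(α, β)` on a set `I ⊆ ℝ` of (nonzero) real values of `s`. -/
def IsCPVSolutionOn (α β : ℂ) (I : Set ℝ) (u₁ u₂ v₁ v₂ : ℝ → ℂ) : Prop :=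
  ∀ s ∈ I,
    DifferentiableAt ℝ u₁ s ∧ DifferentiableAt ℝ u₂ s ∧
    DifferentiableAt ℝ v₁ s ∧ DifferentiableAt ℝ v₂ s ∧
    (s : ℂ) * deriv u₁ s = cpvRHSu₁ α β s (u₁ s) (u₂ s) (v₁ s) (v₂ s) ∧
    (s : ℂ) * deriv u₂ s = cpvRHSu₂ α β s (u₁ s) (u₂ s) (v₁ s) (v₂ s) ∧
    (s : ℂ) * deriv v₁ s = cpvRHSv₁ α β s (u₁ s) (u₂ s) (v₁ s) (v₂ s) ∧
    (s : ℂ) * deriv v₂ s = cpvRHSv₂ α β s (u₁ s) (u₂ s) (v₁ s) (v₂ s)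

/-- `(u₁, u₂, v₁, v₂)`, as functions of `t > 0`, form a solution of the coupled
Painlevé V system with parameters `(α, β)` on the negative imaginary ray
`s = −it`, `t > 0`, where `d/ds` is interpreted as `i·d/dt`. -/
def IsCPVSolutionNegIm (α β : ℂ) (u₁ u₂ v₁ v₂ : ℝ → ℂ) : Prop :=
  ∀ t : ℝ, 0 < t →
    DifferentiableAt ℝ u₁ t ∧ DifferentiableAt ℝ u₂ t ∧
    DifferentiableAt ℝ v₁ t ∧ DifferentiableAt ℝ v₂ t ∧
    (-Complex.I * t) * (Complex.I * deriv u₁ t)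
      = cpvRHSu₁ α β (-Complex.I * t) (u₁ t) (u₂ t) (v₁ t) (v₂ t) ∧
    (-Complex.I * t) * (Complex.I * deriv u₂ t)
      = cpvRHSu₂ α β (-Complex.I * t) (u₁ t) (u₂ t) (v₁ t) (v₂ t) ∧
    (-Complex.I * t) * (Complex.I * deriv v₁ t)
      = cpvRHSv₁ α β (-Complex.I * t) (u₁ t) (u₂ t) (v₁ t) (v₂ t) ∧
    (-Complex.I * t) * (Complex.I * deriv v₂ t)
      = cpvRHSv₂ α β (-Complex.I * t) (u₁ t) (u₂ t) (v₁ t) (v₂ t)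


private lemma cpv_aux_u₁ (α s u v du : ℂ) (hv : v ≠ 0)
    (hdu : s * du = (1/2) * s * u - 2 * u ^ 2 * v * (v ^ 2 - 1) + 2 * α * u * v) :
    s * du = cpvRHSu₁ α 0 s u (-u * v ^ 2) v v⁻¹ := by
  rw [hdu]; simp only [cpvRHSu₁]; field_simp; ring

private lemma cpv_aux_u₂ (α s u v du dv : ℂ) (hv : v ≠ 0)
    (hdu : s * du = (1/2) * s * u - 2 * u ^ 2 * v * (v ^ 2 - 1) + 2 * α * u * v)
    (hdv : s * dv = -(1/2) * s * v + u * (v ^ 2 - 1) ^ 2 - α * (v ^ 2 - 1)) :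
    s * (-du * v ^ 2 + -u * (2 * v * dv)) = cpvRHSu₂ α 0 s u (-u * v ^ 2) v v⁻¹ := by
  have hX : v ^ 4 * v⁻¹ ^ 4 = 1 := by rw [← mul_pow, mul_inv_cancel₀ hv, one_pow]
  simp only [cpvRHSu₂]; field_simp
  linear_combination (-2 * v) * hdu + (-4 * u) * hdv

private lemma cpv_aux_v₁ (α s u v dv : ℂ) (hv : v ≠ 0)
    (hdv : s * dv = -(1/2) * s * v + u * (v ^ 2 - 1) ^ 2 - α * (v ^ 2 - 1)) :
    s * dv = cpvRHSv₁ α 0 s u (-u * v ^ 2) v v⁻¹ := by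
  rw [hdv]; simp only [cpvRHSv₁]; field_simp; ring

private lemma cpv_aux_v₂ (α s u v dv : ℂ) (hv : v ≠ 0)
    (hdv : s * dv = -(1/2) * s * v + u * (v ^ 2 - 1) ^ 2 - α * (v ^ 2 - 1)) :
    s * (-dv / v ^ 2) = cpvRHSv₂ α 0 s u (-u * v ^ 2) v v⁻¹ := by
  have hX : v ^ 6 * v⁻¹ ^ 6 = 1 := by rw [← mul_pow, mul_inv_cancel₀ hv, one_pow]
  simp only [cpvRHSv₂]; field_simp
  linear_combination (-2) * hdv

/-- The β = 0 symmetry of the coupled Painlevé V system: if `u₁, v₁` solve the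
reduced system `s·u₁′ = (1/2)s·u₁ − 2u₁²v₁(v₁²−1) + 2αu₁v₁`,
`s·v₁′ = −(1/2)s·v₁ + u₁(v₁²−1)² − α(v₁²−1)` with `v₁ ≠ 0`, then
`(u₁, v₁, u₂, v₂)` with `u₂ = −u₁v₁²` and `v₂ = 1/v₁` solves the coupled
Painlevé V system with parameters `(α, 0)`; moreover for `α = 0` its
Hamiltonian satisfies `s·H = u₁²(v₁²−1)² − s·u₁v₁`. -/
theorem reduced_system_gives_cpv_solution
    (α : ℂ) (I : Set ℝ) (hIopen : IsOpen I) (hIconn : I.OrdConnected)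
    (hI0 : (0 : ℝ) ∉ I) (u₁ v₁ : ℝ → ℂ)
    (hdiff : ∀ s ∈ I, DifferentiableAt ℝ u₁ s ∧ DifferentiableAt ℝ v₁ s)
    (hv0 : ∀ s ∈ I, v₁ s ≠ 0)
    (hu : ∀ s ∈ I, (s : ℂ) * deriv u₁ s
      = (1/2) * (s : ℂ) * u₁ s - 2 * (u₁ s) ^ 2 * v₁ s * ((v₁ s) ^ 2 - 1)
          + 2 * α * u₁ s * v₁ s)
    (hv : ∀ s ∈ I, (s : ℂ) * deriv v₁ s
      = -(1/2) * (s : ℂ) * v₁ s + u₁ s * ((v₁ s) ^ 2 - 1) ^ 2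
          - α * ((v₁ s) ^ 2 - 1)) :
    IsCPVSolutionOn α 0 I u₁ (fun s => -u₁ s * (v₁ s) ^ 2) v₁
      (fun s => (v₁ s)⁻¹) ∧
    (α = 0 → ∀ s ∈ I,
      cpvSH 0 0 (s : ℂ) (u₁ s) (-u₁ s * (v₁ s) ^ 2) (v₁ s) ((v₁ s)⁻¹)
        = (u₁ s) ^ 2 * ((v₁ s) ^ 2 - 1) ^ 2 - (s : ℂ) * u₁ s * v₁ s) := by

  constructor
  · intro s hs
    obtain ⟨hu1, hv1⟩ := hdiff s hs
    have hsne : s ≠ 0 := fun h => hI0 (h ▸ hs)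
    have hs0 : (s : ℂ) ≠ 0 := Complex.ofReal_ne_zero.mpr hsne
    have hvne := hv0 s hs
    have hsdu := hu s hs
    have hsdv := hv s hs
    have hu1' : HasDerivAt u₁ (deriv u₁ s) s := hu1.hasDerivAt
    have hv1' : HasDerivAt v₁ (deriv v₁ s) s := hv1.hasDerivAt
    have hp : HasDerivAt (fun x => (v₁ x) ^ 2) (2 * v₁ s * deriv v₁ s) s := by
      have h := HasDerivAt.scomp (x := s) (hasDerivAt_pow 2 (v₁ s)) hv1'
      simp only [Function.comp_def] at h
      convert h using 1
      case e'_4 => rfl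
      simp [smul_eq_mul]; ring
    have h2 : HasDerivAt (fun s => -u₁ s * (v₁ s) ^ 2)
        (-(deriv u₁ s) * (v₁ s) ^ 2 + (-u₁ s) * (2 * v₁ s * deriv v₁ s)) s :=
      hu1'.neg.mul hp
    have h3 : HasDerivAt (fun s => (v₁ s)⁻¹)
        (-(deriv v₁ s) / (v₁ s) ^ 2) s := by
      have h := HasDerivAt.scomp (x := s) (hasDerivAt_inv hvne) hv1'
      simp only [Function.comp_def] at h
      convert h using 1
      case e'_4 => rfl
      simp [smul_eq_mul]; field_simp
    refine ⟨hu1, h2.differentiableAt, hv1, h3.differentiableAt, ?_, ?_, ?_, ?_⟩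
    · exact cpv_aux_u₁ α s (u₁ s) (v₁ s) (deriv u₁ s) hvne hsdu
    · rw [h2.deriv]
      exact cpv_aux_u₂ α s (u₁ s) (v₁ s) (deriv u₁ s) (deriv v₁ s) hvne hsdu hsdv
    · exact cpv_aux_v₁ α s (u₁ s) (v₁ s) (deriv v₁ s) hvne hsdv
    · rw [h3.deriv]
      exact cpv_aux_v₂ α s (u₁ s) (v₁ s) (deriv v₁ s) hvne hsdv
  · intro hα s hs
    have hvne := hv0 s hs
    have hX : v₁ s ^ 6 * (v₁ s)⁻¹ ^ 6 = 1 := by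
      rw [← mul_pow, mul_inv_cancel₀ hvne, one_pow]
    simp only [cpvSH, hα]; field_simp
    ring
end

section
/- Let α, β ∈ ℂ, let I ⊆ ℝ∖{0} be an open interval, let u₁, u₂, v₁, v₂ : I → ℂ be differentiable functions satisfying the coupled Painlevé V system with parameters (α, β) on I, and let y : I → ℂ∖{0} be differentiable with s·y′(s)/y(s) = u₁(v₁−1)² + u₂(v₂−1)² + 2β on I. Define the 2×2 matrices A₀ = [[u₁v₁+u₂v₂−β, −(u₁v₁+u₂v₂−α−β)·y], [(u₁v₁+u₂v₂+α−β)/y, −(u₁v₁+u₂v₂)+β]], A₁ = [[−u₁v₁, u₁y], [−u₁v₁²/y, u₁v₁]], A₂ = [[−u₂v₂, u₂y], [−u₂v₂²/y, u₂v₂]], b₁ = −u₁(v₁−1) − u₂(v₂−1) + α + β, b₂ = −u₁v₁(v₁−1) − u₂v₂(v₂−1) + α − β, B = (1/s)·[[0, b₁y], [b₂/y, 0]], and set L(ζ, s) = (s/4)σ₃ + A₀(s)/ζ + A₁(s)/(ζ−1) + A₂(s)/(ζ+1) and U(ζ, s) = (ζ/4)σ₃ + B(s), where σ₃ = diag(1,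 −1). Then the zero-curvature (compatibility) equation ∂L/∂s − ∂U/∂ζ + L·U − U·L = 0 holds for all s ∈ I and all ζ ∈ ℂ∖{0, 1, −1}. -/
open Complex Filter Topology MeasureTheory

/-- The Pauli matrix `σ₃`. -/
noncomputable def pauliσ₃ : Matrix (Fin 2) (Fin 2) ℂ := !![1, 0; 0, -1]

/-- The residue matrix `A₀` of the Lax pair. -/
noncomputable def laxA₀ (α β u₁ u₂ v₁ v₂ y : ℂ) : Matrix (Fin 2) (Fin 2) ℂ :=
  !![u₁ * v₁ + u₂ * v₂ - β, -(u₁ * v₁ + u₂ * v₂ - α - β) * y;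
     (u₁ * v₁ + u₂ * v₂ + α - β) / y, -(u₁ * v₁ + u₂ * v₂) + β]

/-- The residue matrices `A₁`, `A₂` of the Lax pair (with arguments `uₖ, vₖ, y`). -/
noncomputable def laxA (u v y : ℂ) : Matrix (Fin 2) (Fin 2) ℂ :=
  !![-(u * v), u * y; -(u * v ^ 2) / y, u * v]

/-- `b₁ = −u₁(v₁−1) − u₂(v₂−1) + α + β`. -/
noncomputable def laxb₁ (α β u₁ u₂ v₁ v₂ : ℂ) : ℂ :=
  -(u₁ * (v₁ - 1)) - u₂ * (v₂ - 1) + α + β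

/-- `b₂ = −u₁v₁(v₁−1) − u₂v₂(v₂−1) + α − β`. -/
noncomputable def laxb₂ (α β u₁ u₂ v₁ v₂ : ℂ) : ℂ :=
  -(u₁ * v₁ * (v₁ - 1)) - u₂ * v₂ * (v₂ - 1) + α - β

/-- The matrix `B = (1/s)[[0, b₁y], [b₂/y, 0]]` of the Lax pair. -/
noncomputable def laxB (α β u₁ u₂ v₁ v₂ y s : ℂ) : Matrix (Fin 2) (Fin 2) ℂ :=
  (1 / s) • !![0, laxb₁ α β u₁ u₂ v₁ v₂ * y; laxb₂ α β u₁ u₂ v₁ v₂ / y, 0]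

/-- `L(ζ, s) = (s/4)σ₃ + A₀/ζ + A₁/(ζ−1) + A₂/(ζ+1)`. -/
noncomputable def laxL (α β : ℂ) (u₁ u₂ v₁ v₂ y : ℝ → ℂ) (ζ : ℂ) (s : ℝ) :
    Matrix (Fin 2) (Fin 2) ℂ :=
  ((s : ℂ) / 4) • pauliσ₃
    + ζ⁻¹ • laxA₀ α β (u₁ s) (u₂ s) (v₁ s) (v₂ s) (y s)
    + (ζ - 1)⁻¹ • laxA (u₁ s) (v₁ s) (y s)
    + (ζ + 1)⁻¹ • laxA (u₂ s) (v₂ s) (y s)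

/-- `U(ζ, s) = (ζ/4)σ₃ + B(s)`. -/
noncomputable def laxU (α β : ℂ) (u₁ u₂ v₁ v₂ y : ℝ → ℂ) (ζ : ℂ) (s : ℝ) :
    Matrix (Fin 2) (Fin 2) ℂ :=
  (ζ / 4) • pauliσ₃
    + laxB α β (u₁ s) (u₂ s) (v₁ s) (v₂ s) (y s) (s : ℂ)

set_option maxHeartbeats 1600000 in
lemma cpv_zc_key (α β s u1 u2 v1 v2 Y ζ d1 d2 f1 f2 dY : ℂ)
    (hs : s ≠ 0) (hY : Y ≠ 0) (hζ0 : ζ ≠ 0) (hζ1 : ζ - 1 ≠ 0) (hζm1 : ζ + 1 ≠ 0)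
    (he1 : s * d1 = cpvRHSu₁ α β s u1 u2 v1 v2)
    (he2 : s * d2 = cpvRHSu₂ α β s u1 u2 v1 v2)
    (he3 : s * f1 = cpvRHSv₁ α β s u1 u2 v1 v2)
    (he4 : s * f2 = cpvRHSv₂ α β s u1 u2 v1 v2)
    (hey : s * dY = (u1 * (v1 - 1) ^ 2 + u2 * (v2 - 1) ^ 2 + 2 * β) * Y) :
    !![1/4 + ζ⁻¹ * (d1 * v1 + u1 * f1 + d2 * v2 + u2 * f2)
        + (ζ - 1)⁻¹ * (-(d1 * v1 + u1 * f1)) + (ζ + 1)⁻¹ * (-(d2 * v2 + u2 * f2)),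
      ζ⁻¹ * (-((d1 * v1 + u1 * f1 + d2 * v2 + u2 * f2) * Y
          + (u1 * v1 + u2 * v2 - α - β) * dY))
        + (ζ - 1)⁻¹ * (d1 * Y + u1 * dY) + (ζ + 1)⁻¹ * (d2 * Y + u2 * dY);
      ζ⁻¹ * (((d1 * v1 + u1 * f1 + d2 * v2 + u2 * f2) * Y
          - (u1 * v1 + u2 * v2 + α - β) * dY) / Y ^ 2)
        + (ζ - 1)⁻¹ * (-(((d1 * v1 ^ 2 + 2 * u1 * v1 * f1) * Y - u1 * v1 ^ 2 * dY) / Y ^ 2))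
        + (ζ + 1)⁻¹ * (-(((d2 * v2 ^ 2 + 2 * u2 * v2 * f2) * Y - u2 * v2 ^ 2 * dY) / Y ^ 2)),
      -(1/4) + ζ⁻¹ * (-(d1 * v1 + u1 * f1 + d2 * v2 + u2 * f2))
        + (ζ - 1)⁻¹ * (d1 * v1 + u1 * f1) + (ζ + 1)⁻¹ * (d2 * v2 + u2 * f2)]
      - (1/4 : ℂ) • pauliσ₃
      + ((s / 4) • pauliσ₃ + ζ⁻¹ • laxA₀ α β u1 u2 v1 v2 Y
          + (ζ - 1)⁻¹ • laxA u1 v1 Y + (ζ + 1)⁻¹ • laxA u2 v2 Y)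
        * ((ζ / 4) • pauliσ₃ + laxB α β u1 u2 v1 v2 Y s)
      - ((ζ / 4) • pauliσ₃ + laxB α β u1 u2 v1 v2 Y s)
        * ((s / 4) • pauliσ₃ + ζ⁻¹ • laxA₀ α β u1 u2 v1 v2 Y
          + (ζ - 1)⁻¹ • laxA u1 v1 Y + (ζ + 1)⁻¹ • laxA u2 v2 Y) = 0 := by
  simp only [cpvRHSu₁, cpvRHSu₂, cpvRHSv₁, cpvRHSv₂] at he1 he2 he3 he4
  have hzz : ζ * ζ⁻¹ = 1 := mul_inv_cancel₀ hζ0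
  have hz1 : (ζ - 1) * (ζ - 1)⁻¹ = 1 := mul_inv_cancel₀ hζ1
  have hz2 : (ζ + 1) * (ζ + 1)⁻¹ = 1 := mul_inv_cancel₀ hζm1
  have hss : s * s⁻¹ = 1 := mul_inv_cancel₀ hs
  have hYY : Y * Y⁻¹ = 1 := mul_inv_cancel₀ hY
  ext i j
  fin_cases i <;> fin_cases j <;>
    simp only [laxA₀, laxA, laxB, laxb₁, laxb₂, pauliσ₃,
      Matrix.sub_apply, Matrix.add_apply, Matrix.smul_apply, Matrix.mul_apply,
      Fin.sum_univ_two, Matrix.zero_apply, smul_eq_mul, Fin.zero_eta, Fin.mk_one,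
      Fin.isValue, Matrix.of_apply, Matrix.cons_val', Matrix.cons_val_zero,
      Matrix.cons_val_one, Matrix.head_cons, Matrix.head_fin_const, Matrix.empty_val',
      Matrix.cons_val_fin_one]
  · linear_combination (-s⁻¹ * v1 * (ζ - 1)⁻¹ + s⁻¹ * v1 * ζ⁻¹) * he1
      + (-s⁻¹ * v2 * (ζ + 1)⁻¹ + s⁻¹ * v2 * ζ⁻¹) * he2
      + (-s⁻¹ * u1 * (ζ - 1)⁻¹ + s⁻¹ * u1 * ζ⁻¹) * he3
      + (-s⁻¹ * u2 * (ζ + 1)⁻¹ + s⁻¹ * u2 * ζ⁻¹) * he4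
      + (v2 * (ζ + 1)⁻¹ * d2 - v2 * ζ⁻¹ * d2 + v1 * (ζ - 1)⁻¹ * d1 - v1 * ζ⁻¹ * d1 + u2 * (ζ + 1)⁻¹ * f2 - u2 * ζ⁻¹ * f2 + u1 * (ζ - 1)⁻¹ * f1 - u1 * ζ⁻¹ * f1) * hss
      + (s⁻¹ * u2 ^ 2 * v2 * (ζ + 1)⁻¹ - s⁻¹ * u2 ^ 2 * v2 * ζ⁻¹ - s⁻¹ * u2 ^ 2 * v2 ^ 3 * (ζ + 1)⁻¹ + s⁻¹ * u2 ^ 2 * v2 ^ 3 * ζ⁻¹ + s⁻¹ * u1 * u2 * v2 * (ζ - 1)⁻¹ - s⁻¹ * u1 * u2 * v2 * ζ⁻¹ + s⁻¹ * u1 * u2 * v2 ^ 2 * (ζ + 1)⁻¹ - s⁻¹ * u1 * u2 * v2 ^ 2 * (ζ - 1)⁻¹ + s⁻¹ * u1 * u2 * v1 * (ζ + 1)⁻¹ - s⁻¹ * u1 * u2 * v1 * ζ⁻¹ - s⁻¹ * u1 * u2 * v1 * v2 ^ 2 * (ζ + 1)⁻¹ + s⁻¹ * u1 * u2 * v1 *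 v2 ^ 2 * ζ⁻¹ - s⁻¹ * u1 * u2 * v1 ^ 2 * (ζ + 1)⁻¹ + s⁻¹ * u1 * u2 * v1 ^ 2 * (ζ - 1)⁻¹ - s⁻¹ * u1 * u2 * v1 ^ 2 * v2 * (ζ - 1)⁻¹ + s⁻¹ * u1 * u2 * v1 ^ 2 * v2 * ζ⁻¹ + s⁻¹ * u1 ^ 2 * v1 * (ζ - 1)⁻¹ - s⁻¹ * u1 ^ 2 * v1 * ζ⁻¹ - s⁻¹ * u1 ^ 2 * v1 ^ 3 * (ζ - 1)⁻¹ + s⁻¹ * u1 ^ 2 * v1 ^ 3 * ζ⁻¹ - β * s⁻¹ * u2 * (ζ + 1)⁻¹ + β * s⁻¹ * u2 * ζ⁻¹ + β * s⁻¹ * u2 * v2 ^ 2 * (ζ + 1)⁻¹ - β * s⁻¹ * u2 * v2 ^ 2 * ζ⁻¹ - β * s⁻¹ * u1 * (ζ - 1)⁻¹ + β * s⁻¹ * u1 * ζ⁻¹ + β * s⁻¹ * u1 * v1 ^ 2 * (ζ - 1)⁻¹ - β * s⁻¹ * u1 * v1 ^ 2 * ζ⁻¹ + α * s⁻¹ *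 u2 * (ζ + 1)⁻¹ - α * s⁻¹ * u2 * ζ⁻¹ + α * s⁻¹ * u2 * v2 ^ 2 * (ζ + 1)⁻¹ - α * s⁻¹ * u2 * v2 ^ 2 * ζ⁻¹ + α * s⁻¹ * u1 * (ζ - 1)⁻¹ - α * s⁻¹ * u1 * ζ⁻¹ + α * s⁻¹ * u1 * v1 ^ 2 * (ζ - 1)⁻¹ - α * s⁻¹ * u1 * v1 ^ 2 * ζ⁻¹) * hYY
  · linear_combination (s⁻¹ * Y * (ζ - 1)⁻¹ - s⁻¹ * v1 * Y * ζ⁻¹) * he1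
      + (s⁻¹ * Y * (ζ + 1)⁻¹ - s⁻¹ * v2 * Y * ζ⁻¹) * he2
      + (-s⁻¹ * u1 * Y * ζ⁻¹) * he3
      + (-s⁻¹ * u2 * Y * ζ⁻¹) * he4
      + (s⁻¹ * u2 * (ζ + 1)⁻¹ - s⁻¹ * u2 * v2 * ζ⁻¹ + s⁻¹ * u1 * (ζ - 1)⁻¹ - s⁻¹ * u1 * v1 * ζ⁻¹ + β * s⁻¹ * ζ⁻¹ + α * s⁻¹ * ζ⁻¹) * hey
      + ((1/2 : ℂ) * u2 * v2 * Y + (1/2 : ℂ) * u1 * v1 * Y - (1/2 : ℂ) * β * Y - (1/2 : ℂ) * α * Y) * hzz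
      + (-(1/2 : ℂ) * u1 * Y) * hz1
      + (-(1/2 : ℂ) * u2 * Y) * hz2
      + (-Y * (ζ + 1)⁻¹ * d2 - Y * (ζ - 1)⁻¹ * d1 + v2 * Y * ζ⁻¹ * d2 + v1 * Y * ζ⁻¹ * d1 - u2 * (ζ + 1)⁻¹ * dY + (1/2 : ℂ) * u2 * Y - (1/2 : ℂ) * u2 * Y * (ζ + 1)⁻¹ + u2 * Y * ζ⁻¹ * f2 + u2 * v2 * ζ⁻¹ * dY - (1/2 : ℂ) * u2 * v2 * Y - u1 * (ζ - 1)⁻¹ * dY + (1/2 : ℂ) * u1 * Y + (1/2 : ℂ) * u1 * Y * (ζ - 1)⁻¹ + u1 * Y * ζ⁻¹ * f1 + u1 * v1 * ζ⁻¹ * dY - (1/2 : ℂ) * u1 * v1 * Y - β * ζ⁻¹ * dY + (1/2 : ℂ) * β * Y - α * ζ⁻¹ * dY + (1/2 : ℂ) * α * Y) * hss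
  · linear_combination (s⁻¹ * v1 * Y * Y⁻¹ ^ 2 * ζ⁻¹ - s⁻¹ * v1 ^ 2 * Y * Y⁻¹ ^ 2 * (ζ - 1)⁻¹) * he1
      + (s⁻¹ * v2 * Y * Y⁻¹ ^ 2 * ζ⁻¹ - s⁻¹ * v2 ^ 2 * Y * Y⁻¹ ^ 2 * (ζ + 1)⁻¹) * he2
      + (s⁻¹ * u1 * Y * Y⁻¹ ^ 2 * ζ⁻¹ - (2 : ℂ) * s⁻¹ * u1 * v1 * Y * Y⁻¹ ^ 2 * (ζ - 1)⁻¹) * he3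
      + (s⁻¹ * u2 * Y * Y⁻¹ ^ 2 * ζ⁻¹ - (2 : ℂ) * s⁻¹ * u2 * v2 * Y * Y⁻¹ ^ 2 * (ζ + 1)⁻¹) * he4
      + (-s⁻¹ * u2 * v2 * Y⁻¹ ^ 2 * ζ⁻¹ + s⁻¹ * u2 * v2 ^ 2 * Y⁻¹ ^ 2 * (ζ + 1)⁻¹ - s⁻¹ * u1 * v1 * Y⁻¹ ^ 2 * ζ⁻¹ + s⁻¹ * u1 * v1 ^ 2 * Y⁻¹ ^ 2 * (ζ - 1)⁻¹ + β * s⁻¹ * Y⁻¹ ^ 2 * ζ⁻¹ - α * s⁻¹ * Y⁻¹ ^ 2 * ζ⁻¹) * hey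
      + ((1/2 : ℂ) * u2 * v2 * Y⁻¹ + (1/2 : ℂ) * u1 * v1 * Y⁻¹ - (1/2 : ℂ) * β * Y⁻¹ + (1/2 : ℂ) * α * Y⁻¹) * hzz
      + (-(1/2 : ℂ) * u1 * v1 ^ 2 * Y⁻¹) * hz1
      + (-(1/2 : ℂ) * u2 * v2 ^ 2 * Y⁻¹) * hz2
      + (-v2 * Y * Y⁻¹ ^ 2 * ζ⁻¹ * d2 + v2 ^ 2 * Y * Y⁻¹ ^ 2 * (ζ + 1)⁻¹ * d2 - v1 * Y * Y⁻¹ ^ 2 * ζ⁻¹ * d1 + v1 ^ 2 * Y * Y⁻¹ ^ 2 * (ζ - 1)⁻¹ * d1 - u2 * Y * Y⁻¹ ^ 2 * ζ⁻¹ * f2 - (1/2 : ℂ) * u2 * v2 * Y⁻¹ + u2 * v2 * Y⁻¹ ^ 2 * ζ⁻¹ * dY + (2 : ℂ) * u2 * v2 * Y * Y⁻¹ ^ 2 * (ζ + 1)⁻¹ * f2 + (1/2 : ℂ) * u2 * v2 ^ 2 * Y⁻¹ - u2 * v2 ^ 2 * Y⁻¹ ^ 2 * (ζ + 1)⁻¹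 * dY - (1/2 : ℂ) * u2 * v2 ^ 2 * Y * Y⁻¹ ^ 2 * (ζ + 1)⁻¹ - u1 * Y * Y⁻¹ ^ 2 * ζ⁻¹ * f1 - (1/2 : ℂ) * u1 * v1 * Y⁻¹ + u1 * v1 * Y⁻¹ ^ 2 * ζ⁻¹ * dY + (2 : ℂ) * u1 * v1 * Y * Y⁻¹ ^ 2 * (ζ - 1)⁻¹ * f1 + (1/2 : ℂ) * u1 * v1 ^ 2 * Y⁻¹ - u1 * v1 ^ 2 * Y⁻¹ ^ 2 * (ζ - 1)⁻¹ * dY + (1/2 : ℂ) * u1 * v1 ^ 2 * Y * Y⁻¹ ^ 2 * (ζ - 1)⁻¹ + (1/2 : ℂ) * β * Y⁻¹ - β * Y⁻¹ ^ 2 * ζ⁻¹ * dY - (1/2 : ℂ) * α * Y⁻¹ + α * Y⁻¹ ^ 2 * ζ⁻¹ * dY) * hss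
      + (-(1/2 : ℂ) * u2 * v2 ^ 2 * Y⁻¹ * (ζ + 1)⁻¹ + (1/2 : ℂ) * u1 * v1 ^ 2 * Y⁻¹ * (ζ - 1)⁻¹ - (2 : ℂ) * s⁻¹ * u2 ^ 2 * v2 ^ 2 * Y⁻¹ * (ζ + 1)⁻¹ + (2 : ℂ) * s⁻¹ * u2 ^ 2 * v2 ^ 2 * Y⁻¹ * ζ⁻¹ + (2 : ℂ) * s⁻¹ * u2 ^ 2 * v2 ^ 3 * Y⁻¹ * (ζ + 1)⁻¹ - (2 : ℂ) * s⁻¹ * u2 ^ 2 * v2 ^ 3 * Y⁻¹ * ζ⁻¹ - (2 : ℂ) * s⁻¹ * u1 * u2 * v1 * v2 * Y⁻¹ * (ζ + 1)⁻¹ - (2 : ℂ) * s⁻¹ * u1 * u2 * v1 * v2 * Y⁻¹ * (ζ - 1)⁻¹ + (4 : ℂ) * s⁻¹ * u1 * u2 * v1 * v2 * Y⁻¹ * ζ⁻¹ + (2 : ℂ) * s⁻¹ * u1 * u2 * v1 * v2 ^ 2 * Y⁻¹ * (ζ - 1)⁻¹ - (2 : ℂ) * s⁻¹ * u1 * u2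 * v1 * v2 ^ 2 * Y⁻¹ * ζ⁻¹ + (2 : ℂ) * s⁻¹ * u1 * u2 * v1 ^ 2 * v2 * Y⁻¹ * (ζ + 1)⁻¹ - (2 : ℂ) * s⁻¹ * u1 * u2 * v1 ^ 2 * v2 * Y⁻¹ * ζ⁻¹ - (2 : ℂ) * s⁻¹ * u1 ^ 2 * v1 ^ 2 * Y⁻¹ * (ζ - 1)⁻¹ + (2 : ℂ) * s⁻¹ * u1 ^ 2 * v1 ^ 2 * Y⁻¹ * ζ⁻¹ + (2 : ℂ) * s⁻¹ * u1 ^ 2 * v1 ^ 3 * Y⁻¹ * (ζ - 1)⁻¹ - (2 : ℂ) * s⁻¹ * u1 ^ 2 * v1 ^ 3 * Y⁻¹ * ζ⁻¹ + (2 : ℂ) * β * s⁻¹ * u2 * v2 * Y⁻¹ * (ζ + 1)⁻¹ - (4 : ℂ) * β * s⁻¹ * u2 * v2 * Y⁻¹ * ζ⁻¹ + (2 : ℂ) * β * s⁻¹ * u2 * v2 ^ 2 * Y⁻¹ * ζ⁻¹ + (2 : ℂ) * β * s⁻¹ * u1 * v1 * Y⁻¹ * (ζ - 1)⁻¹ -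 (4 : ℂ) * β * s⁻¹ * u1 * v1 * Y⁻¹ * ζ⁻¹ + (2 : ℂ) * β * s⁻¹ * u1 * v1 ^ 2 * Y⁻¹ * ζ⁻¹ + (2 : ℂ) * β ^ 2 * s⁻¹ * Y⁻¹ * ζ⁻¹ - (2 : ℂ) * α * s⁻¹ * u2 * v2 * Y⁻¹ * (ζ + 1)⁻¹ + (2 : ℂ) * α * s⁻¹ * u2 * v2 * Y⁻¹ * ζ⁻¹ - (2 : ℂ) * α * s⁻¹ * u1 * v1 * Y⁻¹ * (ζ - 1)⁻¹ + (2 : ℂ) * α * s⁻¹ * u1 * v1 * Y⁻¹ * ζ⁻¹ - (2 : ℂ) * α * β * s⁻¹ * Y⁻¹ * ζ⁻¹) * hYY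
  · linear_combination (s⁻¹ * v1 * (ζ - 1)⁻¹ - s⁻¹ * v1 * ζ⁻¹) * he1
      + (s⁻¹ * v2 * (ζ + 1)⁻¹ - s⁻¹ * v2 * ζ⁻¹) * he2
      + (s⁻¹ * u1 * (ζ - 1)⁻¹ - s⁻¹ * u1 * ζ⁻¹) * he3
      + (s⁻¹ * u2 * (ζ + 1)⁻¹ - s⁻¹ * u2 * ζ⁻¹) * he4
      + (-v2 * (ζ + 1)⁻¹ * d2 + v2 * ζ⁻¹ * d2 - v1 * (ζ - 1)⁻¹ * d1 + v1 * ζ⁻¹ * d1 - u2 * (ζ + 1)⁻¹ * f2 + u2 * ζ⁻¹ * f2 - u1 * (ζ - 1)⁻¹ * f1 + u1 * ζ⁻¹ * f1) * hss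
      + (-s⁻¹ * u2 ^ 2 * v2 * (ζ + 1)⁻¹ + s⁻¹ * u2 ^ 2 * v2 * ζ⁻¹ + s⁻¹ * u2 ^ 2 * v2 ^ 3 * (ζ + 1)⁻¹ - s⁻¹ * u2 ^ 2 * v2 ^ 3 * ζ⁻¹ - s⁻¹ * u1 * u2 * v2 * (ζ - 1)⁻¹ + s⁻¹ * u1 * u2 * v2 * ζ⁻¹ - s⁻¹ * u1 * u2 * v2 ^ 2 * (ζ + 1)⁻¹ + s⁻¹ * u1 * u2 * v2 ^ 2 * (ζ - 1)⁻¹ - s⁻¹ * u1 * u2 * v1 * (ζ + 1)⁻¹ + s⁻¹ * u1 * u2 * v1 * ζ⁻¹ + s⁻¹ * u1 * u2 * v1 * v2 ^ 2 * (ζ + 1)⁻¹ - s⁻¹ * u1 * u2 * v1 * v2 ^ 2 * ζ⁻¹ + s⁻¹ * u1 * u2 * v1 ^ 2 * (ζ + 1)⁻¹ - s⁻¹ * u1 * u2 * v1 ^ 2 * (ζ - 1)⁻¹ + s⁻¹ * u1 * u2 * v1 ^ 2 * v2 * (ζ - 1)⁻¹ - s⁻¹ * u1 * u2 * v1 ^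 2 * v2 * ζ⁻¹ - s⁻¹ * u1 ^ 2 * v1 * (ζ - 1)⁻¹ + s⁻¹ * u1 ^ 2 * v1 * ζ⁻¹ + s⁻¹ * u1 ^ 2 * v1 ^ 3 * (ζ - 1)⁻¹ - s⁻¹ * u1 ^ 2 * v1 ^ 3 * ζ⁻¹ + β * s⁻¹ * u2 * (ζ + 1)⁻¹ - β * s⁻¹ * u2 * ζ⁻¹ - β * s⁻¹ * u2 * v2 ^ 2 * (ζ + 1)⁻¹ + β * s⁻¹ * u2 * v2 ^ 2 * ζ⁻¹ + β * s⁻¹ * u1 * (ζ - 1)⁻¹ - β * s⁻¹ * u1 * ζ⁻¹ - β * s⁻¹ * u1 * v1 ^ 2 * (ζ - 1)⁻¹ + β * s⁻¹ * u1 * v1 ^ 2 * ζ⁻¹ - α * s⁻¹ * u2 * (ζ + 1)⁻¹ + α * s⁻¹ * u2 * ζ⁻¹ - α * s⁻¹ * u2 * v2 ^ 2 * (ζ + 1)⁻¹ + α * s⁻¹ * u2 * v2 ^ 2 * ζ⁻¹ - α * s⁻¹ * u1 * (ζ - 1)⁻¹ + α * s⁻¹ * u1 * ζ⁻¹ - α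 * s⁻¹ * u1 * v1 ^ 2 * (ζ - 1)⁻¹ + α * s⁻¹ * u1 * v1 ^ 2 * ζ⁻¹) * hYY

set_option maxHeartbeats 1600000 in
/-- Zero-curvature equation for the Lax pair of the coupled Painlevé V system:
if `(u₁, u₂, v₁, v₂)` solves the system and `s·y′/y = u₁(v₁−1)² + u₂(v₂−1)² + 2β`,
then `∂L/∂s − ∂U/∂ζ + LU − UL = 0`, where `∂U/∂ζ = (1/4)σ₃`. -/
theorem cpv_zero_curvature
    (α β : ℂ) (I : Set ℝ) (hIopen : IsOpen I) (hIconn : I.OrdConnected)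
    (hI0 : (0 : ℝ) ∉ I) (u₁ u₂ v₁ v₂ y : ℝ → ℂ)
    (hsol : IsCPVSolutionOn α β I u₁ u₂ v₁ v₂)
    (hy : ∀ s ∈ I, y s ≠ 0 ∧ DifferentiableAt ℝ y s ∧
      (s : ℂ) * deriv y s / y s
        = u₁ s * (v₁ s - 1) ^ 2 + u₂ s * (v₂ s - 1) ^ 2 + 2 * β) :
    ∀ s ∈ I, ∀ ζ : ℂ, ζ ≠ 0 → ζ ≠ 1 → ζ ≠ -1 →
      ∃ L' : Matrix (Fin 2) (Fin 2) ℂ,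
        (∀ i j : Fin 2,
          HasDerivAt (fun x : ℝ => laxL α β u₁ u₂ v₁ v₂ y ζ x i j) (L' i j) s) ∧
        L' - (1/4 : ℂ) • pauliσ₃
          + laxL α β u₁ u₂ v₁ v₂ y ζ s * laxU α β u₁ u₂ v₁ v₂ y ζ s
          - laxU α β u₁ u₂ v₁ v₂ y ζ s * laxL α β u₁ u₂ v₁ v₂ y ζ s = 0 := by
  intro s hs ζ hζ0 hζ1 hζm1
  obtain ⟨hdu₁, hdu₂, hdv₁, hdv₂, e1, e2, e3, e4⟩ := hsol s hs
  obtain ⟨hy0, hdy, ey⟩ := hy s hs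
  have hsR : s ≠ 0 := fun h => hI0 (h ▸ hs)
  have hs0 : (s : ℂ) ≠ 0 := Complex.ofReal_ne_zero.mpr hsR
  have hζ1' : ζ - 1 ≠ 0 := sub_ne_zero.mpr hζ1
  have hζm1' : ζ + 1 ≠ 0 := fun h => hζm1 (by linear_combination h)
  have Hu1 : HasDerivAt u₁ (deriv u₁ s) s := hdu₁.hasDerivAt
  have Hu2 : HasDerivAt u₂ (deriv u₂ s) s := hdu₂.hasDerivAt
  have Hv1 : HasDerivAt v₁ (deriv v₁ s) s := hdv₁.hasDerivAt
  have Hv2 : HasDerivAt v₂ (deriv v₂ s) s := hdv₂.hasDerivAt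
  have Hy : HasDerivAt y (deriv y s) s := hdy.hasDerivAt
  have Hre : HasDerivAt (fun x : ℝ => (x : ℂ)) 1 s := by
    have := (hasDerivAt_id s).ofReal_comp; simpa using this
  refine ⟨!![1/4 + ζ⁻¹ * (deriv u₁ s * v₁ s + u₁ s * deriv v₁ s
          + deriv u₂ s * v₂ s + u₂ s * deriv v₂ s)
        + (ζ - 1)⁻¹ * (-(deriv u₁ s * v₁ s + u₁ s * deriv v₁ s))
        + (ζ + 1)⁻¹ * (-(deriv u₂ s * v₂ s + u₂ s * deriv v₂ s)),
      ζ⁻¹ * (-((deriv u₁ s * v₁ s + u₁ s * deriv v₁ s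
            + deriv u₂ s * v₂ s + u₂ s * deriv v₂ s) * y s
          + (u₁ s * v₁ s + u₂ s * v₂ s - α - β) * deriv y s))
        + (ζ - 1)⁻¹ * (deriv u₁ s * y s + u₁ s * deriv y s)
        + (ζ + 1)⁻¹ * (deriv u₂ s * y s + u₂ s * deriv y s);
      ζ⁻¹ * (((deriv u₁ s * v₁ s + u₁ s * deriv v₁ s
            + deriv u₂ s * v₂ s + u₂ s * deriv v₂ s) * y s
          - (u₁ s * v₁ s + u₂ s * v₂ s + α - β) * deriv y s) / (y s) ^ 2)
        + (ζ - 1)⁻¹ * (-(((deriv u₁ s * v₁ s ^ 2 + 2 * u₁ s * v₁ s * deriv v₁ s) * y s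
            - u₁ s * v₁ s ^ 2 * deriv y s) / (y s) ^ 2))
        + (ζ + 1)⁻¹ * (-(((deriv u₂ s * v₂ s ^ 2 + 2 * u₂ s * v₂ s * deriv v₂ s) * y s
            - u₂ s * v₂ s ^ 2 * deriv y s) / (y s) ^ 2)),
      -(1/4) + ζ⁻¹ * (-(deriv u₁ s * v₁ s + u₁ s * deriv v₁ s
          + deriv u₂ s * v₂ s + u₂ s * deriv v₂ s))
        + (ζ - 1)⁻¹ * (deriv u₁ s * v₁ s + u₁ s * deriv v₁ s)
        + (ζ + 1)⁻¹ * (deriv u₂ s * v₂ s + u₂ s * deriv v₂ s)],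
    ?_, ?_⟩
  · intro i j
    fin_cases i <;> fin_cases j <;>
      simp only [Fin.zero_eta, Fin.mk_one, Fin.isValue, Matrix.of_apply, Matrix.cons_val',
        Matrix.cons_val_zero, Matrix.cons_val_one, Matrix.head_cons, Matrix.head_fin_const,
        Matrix.empty_val', Matrix.cons_val_fin_one]
    · have hf : (fun x : ℝ => laxL α β u₁ u₂ v₁ v₂ y ζ x 0 0)
          = fun x : ℝ => (x : ℂ) / 4 + ζ⁻¹ * (u₁ x * v₁ x + u₂ x * v₂ x - β)
            + (ζ - 1)⁻¹ * (-(u₁ x * v₁ x)) + (ζ + 1)⁻¹ * (-(u₂ x * v₂ x)) := by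
        funext x
        simp [laxL, laxA₀, laxA, pauliσ₃]
        try ring
      have H := (((Hre.div_const (4 : ℂ)).add
          ((((Hu1.mul Hv1).add (Hu2.mul Hv2)).sub_const β).const_mul ζ⁻¹)).add
          (((Hu1.mul Hv1).neg).const_mul (ζ - 1)⁻¹)).add
          (((Hu2.mul Hv2).neg).const_mul (ζ + 1)⁻¹)
      rw [hf]
      exact H.congr_deriv (by ring)
    · have hf : (fun x : ℝ => laxL α β u₁ u₂ v₁ v₂ y ζ x 0 1)
          = fun x : ℝ => ζ⁻¹ * (-((u₁ x * v₁ x + u₂ x * v₂ x - α - β) * y x))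
            + (ζ - 1)⁻¹ * (u₁ x * y x) + (ζ + 1)⁻¹ * (u₂ x * y x) := by
        funext x
        simp [laxL, laxA₀, laxA, pauliσ₃]
        try ring
      have H := ((((((((Hu1.mul Hv1).add (Hu2.mul Hv2)).sub_const α).sub_const β).mul
          Hy).neg).const_mul ζ⁻¹).add
          ((Hu1.mul Hy).const_mul (ζ - 1)⁻¹)).add
          ((Hu2.mul Hy).const_mul (ζ + 1)⁻¹)
      rw [hf]
      exact H.congr_deriv (by simp only [Pi.mul_apply, Pi.add_apply, Pi.neg_apply, Pi.pow_apply]; ring)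
    · have hf : (fun x : ℝ => laxL α β u₁ u₂ v₁ v₂ y ζ x 1 0)
          = fun x : ℝ => ζ⁻¹ * ((u₁ x * v₁ x + u₂ x * v₂ x + α - β) / y x)
            + (ζ - 1)⁻¹ * (-(u₁ x * (v₁ x * v₁ x)) / y x)
            + (ζ + 1)⁻¹ * (-(u₂ x * (v₂ x * v₂ x)) / y x) := by
        funext x
        simp [laxL, laxA₀, laxA, pauliσ₃]
        try ring
      have Hq := (((Hu1.mul Hv1).add (Hu2.mul Hv2)).add_const α).sub_const β
      have H := (((Hq.div Hy hy0).const_mul ζ⁻¹).add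
          ((((Hu1.mul (Hv1.mul Hv1)).neg).div Hy hy0).const_mul (ζ - 1)⁻¹)).add
          ((((Hu2.mul (Hv2.mul Hv2)).neg).div Hy hy0).const_mul (ζ + 1)⁻¹)
      rw [hf]
      exact H.congr_deriv (by simp only [Pi.mul_apply, Pi.add_apply, Pi.neg_apply, Pi.pow_apply]; ring)
    · have hf : (fun x : ℝ => laxL α β u₁ u₂ v₁ v₂ y ζ x 1 1)
          = fun x : ℝ => -((x : ℂ) / 4) + ζ⁻¹ * (-(u₁ x * v₁ x + u₂ x * v₂ x) + β)
            + (ζ - 1)⁻¹ * (u₁ x * v₁ x) + (ζ + 1)⁻¹ * (u₂ x * v₂ x) := by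
        funext x
        simp [laxL, laxA₀, laxA, pauliσ₃]
        try ring
      have H := ((((Hre.div_const (4 : ℂ)).neg).add
          (((((Hu1.mul Hv1).add (Hu2.mul Hv2)).neg).add_const β).const_mul ζ⁻¹)).add
          (((Hu1.mul Hv1)).const_mul (ζ - 1)⁻¹)).add
          (((Hu2.mul Hv2)).const_mul (ζ + 1)⁻¹)
      rw [hf]
      exact H.congr_deriv (by ring)
  · have ey' : (s : ℂ) * deriv y s
        = (u₁ s * (v₁ s - 1) ^ 2 + u₂ s * (v₂ s - 1) ^ 2 + 2 * β) * y s := by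
      rw [div_eq_iff hy0] at ey; exact ey
    exact cpv_zc_key α β s (u₁ s) (u₂ s) (v₁ s) (v₂ s) (y s) ζ
      (deriv u₁ s) (deriv u₂ s) (deriv v₁ s) (deriv v₂ s) (deriv y s)
      hs0 hy0 hζ0 hζ1' hζm1' e1 e2 e3 e4 ey'
end

section
/- Let α, β ∈ ℂ, let I ⊆ ℝ∖{0} be an open interval, and let u₁, u₂, v₁, v₂ : I → ℂ be differentiable functions satisfying the coupled Painlevé V system with parameters (α, β) on I. Then, with H the Hamiltonian of the system, the function s ↦ s·H(s) is differentiable on I and d/ds (s·H(s)) = −(1/2)·(u₁(s)v₁(s) − u₂(s)v₂(s)) for all s ∈ I. -/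
open Complex Filter Topology MeasureTheory

lemma hasDerivAt_sq {f : ℝ → ℂ} {f' : ℂ} {x : ℝ} (h : HasDerivAt f f' x) :
    HasDerivAt (fun y => f y ^ 2) (2 * f x * f') x := by
  have h2 := h.mul h
  have hfn : (f * f) = fun y => f y ^ 2 := by ext y; rw [Pi.mul_apply]; ring
  rw [hfn] at h2
  exact h2.congr_deriv (by ring)

set_option maxHeartbeats 1000000

/-- Along any solution of the coupled Painlevé V system,
`d/ds (s·H(s)) = −(1/2)(u₁v₁ − u₂v₂)`. -/
theorem cpv_sH_deriv
    (α β : ℂ) (I : Set ℝ) (hIopen : IsOpen I) (hIconn : I.OrdConnected)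
    (hI0 : (0 : ℝ) ∉ I) (u₁ u₂ v₁ v₂ : ℝ → ℂ)
    (hsol : IsCPVSolutionOn α β I u₁ u₂ v₁ v₂) :
    ∀ s ∈ I,
      HasDerivAt (fun x : ℝ => cpvSH α β (x : ℂ) (u₁ x) (u₂ x) (v₁ x) (v₂ x))
        (-(1/2) * (u₁ s * v₁ s - u₂ s * v₂ s)) s := by
  intro s hs
  obtain ⟨hd1, hd2, hd3, hd4, he1, he2, he3, he4⟩ := hsol s hs
  have hsr : s ≠ 0 := fun h => hI0 (h ▸ hs)
  have hsne : (s : ℂ) ≠ 0 := Complex.ofReal_ne_zero.mpr hsr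
  set du₁ := deriv u₁ s with hdu₁
  set du₂ := deriv u₂ s with hdu₂
  set dv₁ := deriv v₁ s with hdv₁
  set dv₂ := deriv v₂ s with hdv₂
  clear_value du₁ du₂ dv₁ dv₂
  have hu₁ : HasDerivAt u₁ du₁ s := hdu₁ ▸ hd1.hasDerivAt
  have hu₂ : HasDerivAt u₂ du₂ s := hdu₂ ▸ hd2.hasDerivAt
  have hv₁ : HasDerivAt v₁ dv₁ s := hdv₁ ▸ hd3.hasDerivAt
  have hv₂ : HasDerivAt v₂ dv₂ s := hdv₂ ▸ hd4.hasDerivAt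
  have hsC : HasDerivAt (fun x : ℝ => (x : ℂ)) 1 s := by
    simpa using (hasDerivAt_id s).ofReal_comp
  have H := (((((((hasDerivAt_sq hu₁).mul hv₁).mul (hasDerivAt_sq (hv₁.sub_const 1))).add
      (((hasDerivAt_sq hu₂).mul hv₂).mul (hasDerivAt_sq (hv₂.sub_const 1)))).sub
      ((hsC.div_const 2).mul ((hu₁.mul hv₁).sub (hu₂.mul hv₂)))).sub
      (((hu₁.mul ((hasDerivAt_sq hv₁).sub_const 1)).add
        (hu₂.mul ((hasDerivAt_sq hv₂).sub_const 1))).const_mul α)).sub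
      (((hu₁.mul (hasDerivAt_sq (hv₁.sub_const 1))).add
        (hu₂.mul (hasDerivAt_sq (hv₂.sub_const 1)))).const_mul β)).add
      ((((hu₁.mul hu₂).mul (hv₁.add hv₂)).mul (hv₁.sub_const 1)).mul (hv₂.sub_const 1))
  unfold cpvSH
  refine H.congr_deriv ?_
  rw [cpvRHSu₁] at he1; rw [cpvRHSu₂] at he2; rw [cpvRHSv₁] at he3; rw [cpvRHSv₂] at he4
  simp only [Pi.mul_apply, Pi.add_apply, Pi.sub_apply]
  refine mul_left_cancel₀ hsne ?_
  linear_combination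
      (-((s:ℂ)/2) * v₁ s + 2 * u₁ s * v₁ s * (v₁ s - 1) ^ 2
        + u₂ s * (v₁ s + v₂ s) * (v₁ s - 1) * (v₂ s - 1) - α * (v₁ s ^ 2 - 1)
        - β * (v₁ s - 1) ^ 2) * he1
    + ((s:ℂ)/2 * v₂ s + 2 * u₂ s * v₂ s * (v₂ s - 1) ^ 2
        + u₁ s * (v₁ s + v₂ s) * (v₁ s - 1) * (v₂ s - 1) - α * (v₂ s ^ 2 - 1)
        - β * (v₂ s - 1) ^ 2) * he2
    - ((s:ℂ)/2 * u₁ s - u₁ s ^ 2 * (v₁ s - 1) * (3 * v₁ s - 1)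
        - u₁ s * u₂ s * (v₂ s - 1) * (2 * v₁ s + v₂ s - 1) + 2 * (α + β) * u₁ s * v₁ s
        - 2 * β * u₁ s) * he3
    - (-((s:ℂ)/2) * u₂ s - u₂ s ^ 2 * (v₂ s - 1) * (3 * v₂ s - 1)
        - u₁ s * u₂ s * (v₁ s - 1) * (v₁ s + 2 * v₂ s - 1) + 2 * (α + β) * u₂ s * v₂ s
        - 2 * β * u₂ s) * he4
end

section
/- Let α, β ∈ ℂ, let I ⊆ ℝ∖{0} be an open interval, let u₁, u₂, v₁, v₂ : I → ℂ be differentiable functions satisfying the coupled Painlevé V system with parameters (α, β) on I, and let y, d : I → ℂ∖{0} be differentiable functions with s·y′(s)/y(s) = u₁(v₁−1)² + u₂(v₂−1)² + 2β and s·d′(s)/d(s) = −u₁(v₁²−1) − u₂(v₂²−1) + 2α on I. Then, with H the Hamiltonian of the system, for all s ∈ I: 2H(s) − u₁(s)v₁′(s) − u₂(s)v₂′(s) = d/ds(s·H(s)) + α·d′(s)/d(s) − β·y′(s)/y(s) − 2(α²−β²)/s. Equivalently, H = (u₁v₁′ + u₂v₂′ − H) + d/ds( sH + α·log d − β·log y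 − 2(α²−β²)·log s ). -/
open Complex Filter Topology MeasureTheory

set_option maxHeartbeats 2000000 in
/-- The differential identity
`H = (u₁v₁′ + u₂v₂′ − H) + d/ds(sH + α log d − β log y − 2(α²−β²) log s)`,
stated in the equivalent form
`2H − u₁v₁′ − u₂v₂′ = d/ds(sH) + α·d′/d − β·y′/y − 2(α²−β²)/s`,
for any solution of the coupled Painlevé V system together with gauge
functions `y, d` satisfying `s·y′/y = u₁(v₁−1)² + u₂(v₂−1)² + 2β` and
`s·d′/d = −u₁(v₁²−1) − u₂(v₂²−1) + 2α`. -/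
theorem cpv_hamiltonian_total_differential_identity
    (α β : ℂ) (I : Set ℝ) (hIopen : IsOpen I) (hIconn : I.OrdConnected)
    (hI0 : (0 : ℝ) ∉ I) (u₁ u₂ v₁ v₂ y d : ℝ → ℂ)
    (hsol : IsCPVSolutionOn α β I u₁ u₂ v₁ v₂)
    (hy : ∀ s ∈ I, y s ≠ 0 ∧ DifferentiableAt ℝ y s ∧
      (s : ℂ) * deriv y s / y s
        = u₁ s * (v₁ s - 1) ^ 2 + u₂ s * (v₂ s - 1) ^ 2 + 2 * β)
    (hd : ∀ s ∈ I, d s ≠ 0 ∧ DifferentiableAt ℝ d s ∧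
      (s : ℂ) * deriv d s / d s
        = -(u₁ s * ((v₁ s) ^ 2 - 1)) - u₂ s * ((v₂ s) ^ 2 - 1) + 2 * α) :
    ∀ s ∈ I,
      2 * cpvH α β (s : ℂ) (u₁ s) (u₂ s) (v₁ s) (v₂ s)
          - u₁ s * deriv v₁ s - u₂ s * deriv v₂ s
        = deriv (fun x : ℝ => cpvSH α β (x : ℂ) (u₁ x) (u₂ x) (v₁ x) (v₂ x)) s
            + α * deriv d s / d s - β * deriv y s / y s
            - 2 * (α ^ 2 - β ^ 2) / (s : ℂ) := by
  intro s hs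
  obtain ⟨hu1d, hu2d, hv1d, hv2d, eu1, eu2, ev1, ev2⟩ := hsol s hs
  obtain ⟨hy0, hyd, hye⟩ := hy s hs
  obtain ⟨hd0, hdd, hde⟩ := hd s hs
  have hsne : s ≠ 0 := fun h => hI0 (h ▸ hs)
  have hs0 : (s : ℂ) ≠ 0 := Complex.ofReal_ne_zero.mpr hsne
  have hu1 : HasDerivAt u₁ (deriv u₁ s) s := hu1d.hasDerivAt
  have hu2 : HasDerivAt u₂ (deriv u₂ s) s := hu2d.hasDerivAt
  have hv1 : HasDerivAt v₁ (deriv v₁ s) s := hv1d.hasDerivAt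
  have hv2 : HasDerivAt v₂ (deriv v₂ s) s := hv2d.hasDerivAt
  have hx : HasDerivAt (fun x : ℝ => (x : ℂ)) 1 s := by
    simpa using (hasDerivAt_id s).ofReal_comp
  have hF : HasDerivAt
      (fun x : ℝ => cpvSH α β (x : ℂ) (u₁ x) (u₂ x) (v₁ x) (v₂ x))
      (-(1 / 2) * (u₁ s * v₁ s - u₂ s * v₂ s)
        + (2 * u₁ s * v₁ s * (v₁ s - 1) ^ 2 - ((s : ℂ) / 2) * v₁ s
            - α * ((v₁ s) ^ 2 - 1) - β * (v₁ s - 1) ^ 2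
            + u₂ s * (v₁ s + v₂ s) * (v₁ s - 1) * (v₂ s - 1)) * deriv u₁ s
        + (2 * u₂ s * v₂ s * (v₂ s - 1) ^ 2 + ((s : ℂ) / 2) * v₂ s
            - α * ((v₂ s) ^ 2 - 1) - β * (v₂ s - 1) ^ 2
            + u₁ s * (v₁ s + v₂ s) * (v₁ s - 1) * (v₂ s - 1)) * deriv u₂ s
        + ((u₁ s) ^ 2 * ((v₁ s - 1) ^ 2 + 2 * v₁ s * (v₁ s - 1))
            - ((s : ℂ) / 2) * u₁ s - 2 * α * u₁ s * v₁ s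
            - 2 * β * u₁ s * (v₁ s - 1)
            + u₁ s * u₂ s * ((v₁ s - 1) * (v₂ s - 1)
              + (v₁ s + v₂ s) * (v₂ s - 1))) * deriv v₁ s
        + ((u₂ s) ^ 2 * ((v₂ s - 1) ^ 2 + 2 * v₂ s * (v₂ s - 1))
            + ((s : ℂ) / 2) * u₂ s - 2 * α * u₂ s * v₂ s
            - 2 * β * u₂ s * (v₂ s - 1)
            + u₁ s * u₂ s * ((v₁ s - 1) * (v₂ s - 1)
              + (v₁ s + v₂ s) * (v₁ s - 1))) * deriv v₂ s) s := by
    have hw1 : HasDerivAt (fun x => v₁ x - 1) (deriv v₁ s) s := hv1.sub_const 1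
    have hw2 : HasDerivAt (fun x => v₂ x - 1) (deriv v₂ s) s := hv2.sub_const 1
    have h := (((((((hu1.mul hu1).mul hv1).mul (hw1.mul hw1)).add
        (((hu2.mul hu2).mul hv2).mul (hw2.mul hw2))).sub
        ((hx.div_const 2).mul ((hu1.mul hv1).sub (hu2.mul hv2)))).sub
        (((hu1.mul ((hv1.mul hv1).sub_const 1)).add
          (hu2.mul ((hv2.mul hv2).sub_const 1))).const_mul α)).sub
        (((hu1.mul (hw1.mul hw1)).add
          (hu2.mul (hw2.mul hw2))).const_mul β)).add
        ((((hu1.mul hu2).mul (hv1.add hv2)).mul hw1).mul hw2)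
    unfold cpvSH
    simp only [pow_two]
    convert h using 1
    rfl
    rfl
    simp only [Pi.mul_apply, Pi.add_apply, Pi.sub_apply]
    ring
  have hye' : (s : ℂ) * deriv y s
      = (u₁ s * (v₁ s - 1) ^ 2 + u₂ s * (v₂ s - 1) ^ 2 + 2 * β) * y s :=
    (div_eq_iff hy0).mp hye
  have hde' : (s : ℂ) * deriv d s
      = (-(u₁ s * ((v₁ s) ^ 2 - 1)) - u₂ s * ((v₂ s) ^ 2 - 1) + 2 * α) * d s :=
    (div_eq_iff hd0).mp hde
  have hdterm : α * deriv d s / d s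
      = α * (-(u₁ s * ((v₁ s) ^ 2 - 1)) - u₂ s * ((v₂ s) ^ 2 - 1) + 2 * α)
        / (s : ℂ) := by
    rw [div_eq_div_iff hd0 hs0]; linear_combination α * hde'
  have hyterm : β * deriv y s / y s
      = β * (u₁ s * (v₁ s - 1) ^ 2 + u₂ s * (v₂ s - 1) ^ 2 + 2 * β)
        / (s : ℂ) := by
    rw [div_eq_div_iff hy0 hs0]; linear_combination β * hye'
  rw [hdterm, hyterm]
  refine mul_left_cancel₀ hs0 ?_
  rw [hF.deriv]
  have hH2 : cpvH α β (s : ℂ) (u₁ s) (u₂ s) (v₁ s) (v₂ s) * (s : ℂ)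
      = cpvSH α β (s : ℂ) (u₁ s) (u₂ s) (v₁ s) (v₂ s) := by
    unfold cpvH; exact div_mul_cancel₀ _ hs0
  have hc1 : α * (-(u₁ s * ((v₁ s) ^ 2 - 1)) - u₂ s * ((v₂ s) ^ 2 - 1) + 2 * α)
        / (s : ℂ) * (s : ℂ)
      = α * (-(u₁ s * ((v₁ s) ^ 2 - 1)) - u₂ s * ((v₂ s) ^ 2 - 1) + 2 * α) :=
    div_mul_cancel₀ _ hs0
  have hc2 : β * (u₁ s * (v₁ s - 1) ^ 2 + u₂ s * (v₂ s - 1) ^ 2 + 2 * β)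
        / (s : ℂ) * (s : ℂ)
      = β * (u₁ s * (v₁ s - 1) ^ 2 + u₂ s * (v₂ s - 1) ^ 2 + 2 * β) :=
    div_mul_cancel₀ _ hs0
  have hc3 : 2 * (α ^ 2 - β ^ 2) / (s : ℂ) * (s : ℂ) = 2 * (α ^ 2 - β ^ 2) :=
    div_mul_cancel₀ _ hs0
  unfold cpvSH at hH2
  unfold cpvRHSu₁ at eu1
  unfold cpvRHSu₂ at eu2
  unfold cpvRHSv₁ at ev1
  unfold cpvRHSv₂ at ev2
  linear_combination (2 : ℂ) * hH2
    - (2 * u₁ s * v₁ s * (v₁ s - 1) ^ 2 - ((s : ℂ) / 2) * v₁ s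
        - α * ((v₁ s) ^ 2 - 1) - β * (v₁ s - 1) ^ 2
        + u₂ s * (v₁ s + v₂ s) * (v₁ s - 1) * (v₂ s - 1)) * eu1
    - (2 * u₂ s * v₂ s * (v₂ s - 1) ^ 2 + ((s : ℂ) / 2) * v₂ s
        - α * ((v₂ s) ^ 2 - 1) - β * (v₂ s - 1) ^ 2
        + u₁ s * (v₁ s + v₂ s) * (v₁ s - 1) * (v₂ s - 1)) * eu2
    - (u₁ s + (u₁ s) ^ 2 * ((v₁ s - 1) ^ 2 + 2 * v₁ s * (v₁ s - 1))
        - ((s : ℂ) / 2) * u₁ s - 2 * α * u₁ s * v₁ s - 2 * β * u₁ s * (v₁ s - 1)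
        + u₁ s * u₂ s * ((v₁ s - 1) * (v₂ s - 1) + (v₁ s + v₂ s) * (v₂ s - 1))) * ev1
    - (u₂ s + (u₂ s) ^ 2 * ((v₂ s - 1) ^ 2 + 2 * v₂ s * (v₂ s - 1))
        + ((s : ℂ) / 2) * u₂ s - 2 * α * u₂ s * v₂ s - 2 * β * u₂ s * (v₂ s - 1)
        + u₁ s * u₂ s * ((v₁ s - 1) * (v₂ s - 1) + (v₁ s + v₂ s) * (v₁ s - 1))) * ev2
    - hc1 + hc2 + hc3
end
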